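/- Let G be a P_5-free graph containing an induced copy C of the complement of C_{2t+1} (t ≥ 2), with vertices v_1,...,v_{2t+1} where v_i v_j ∈ E if and only if |i−j| > 1 (indices mod 2t+1). Then no vertex outside C has exactly one neighbor on C. -/

import Mathlib

open SimpleGraph

/-- `G` contains no induced subgraph isomorphic to `H`. -/
def HFree {W V : Type*} (H : SimpleGraph W) (G : SimpleGraph V) : Prop :=
  IsEmpty (H ↪g G)

/-- `G` is `k`-vertex-critical: `χ(G) = k` and deleting any vertex decreases
the chromatic number below `k`. -/
def IsKVertexCritical {V : Type*} (G : SimpleGraph V) (k : ℕ) : Prop :=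
  G.chromaticNumber = k ∧ ∀ v : V, (G.induce {v}ᶜ).chromaticNumber < k

/-- The star `K_{1,s}`: center `0`, leaves `1, …, s`. -/
def starGraph (s : ℕ) : SimpleGraph (Fin (s + 1)) :=
  SimpleGraph.fromRel (fun i _ => (i : ℕ) = 0)

/-- `K_{1,s} + P_1`: the disjoint union of the star `K_{1,s}`
(center `0`, leaves `1, …, s`) and the isolated vertex `s + 1`. -/
def starPlusP1 (s : ℕ) : SimpleGraph (Fin (s + 2)) :=
  SimpleGraph.fromRel (fun i j => (i : ℕ) = 0 ∧ (j : ℕ) ≠ 0 ∧ (j : ℕ) ≤ s)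

/-- The complement of `K_3 + 2P_1`: vertices `0,1,2` pairwise nonadjacent,
vertices `3,4` adjacent to everything else. -/
def coK3Plus2P1 : SimpleGraph (Fin 5) :=
  SimpleGraph.fromRel (fun i j => 3 ≤ (i : ℕ) ∨ 3 ≤ (j : ℕ))

lemma antihole_adj {n : ℕ} {a b : Fin (n+1)} (h0 : (a-b).val ≠ 0) (h1 : (a-b).val ≠ 1)
    (h2 : (b-a).val ≠ 1) : ((cycleGraph (n+1))ᶜ).Adj a b := by
  rw [compl_adj]
  refine ⟨fun e => ?_, ?_⟩
  · subst e; exact h0 (by simp)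
  · rw [cycleGraph_adj']; push_neg; exact ⟨h1, h2⟩

lemma antihole_nonadj {n : ℕ} {a b : Fin n} (h1 : (a-b).val = 1) :
    ¬ ((cycleGraph n)ᶜ).Adj a b := by
  rw [compl_adj]
  rintro ⟨-, h⟩
  exact h (cycleGraph_adj'.2 (Or.inl h1))

lemma fin_ne_of_sub {n : ℕ} {a b : Fin (n+1)} (h : (a-b).val ≠ 0) : a ≠ b := by
  rintro rfl; exact h (by simp)

set_option maxHeartbeats 1000000 in
theorem stmt8 {V : Type*} (G : SimpleGraph V) (hP5 : HFree (pathGraph 5) G)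
    (t : ℕ) (ht : 2 ≤ t) (f : ((cycleGraph (2 * t + 1))ᶜ) ↪g G) :
    ∀ x : V, x ∉ Set.range f → ¬ ∃! i : Fin (2 * t + 1), G.Adj x (f i) := by
  rintro x hx ⟨i, hxi, huniq⟩
  obtain ⟨c1, hc1⟩ : ∃ c : Fin (2*t+1), c.val = 1 := ⟨⟨1, by omega⟩, rfl⟩
  obtain ⟨c2, hc2⟩ : ∃ c : Fin (2*t+1), c.val = 2 := ⟨⟨2, by omega⟩, rfl⟩
  obtain ⟨a2, ha2⟩ : ∃ a, a = i + c2 := ⟨_, rfl⟩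
  obtain ⟨a3, ha3⟩ : ∃ a, a = i - c1 := ⟨_, rfl⟩
  obtain ⟨a4, ha4⟩ : ∃ a, a = i + c1 := ⟨_, rfl⟩
  -- val computations
  have hneg : ∀ c : Fin (2*t+1), 0 < c.val → ((-c : Fin (2*t+1))).val = 2*t+1 - c.val := by
    intro c hc
    rw [Fin.coe_neg, Nat.mod_eq_of_lt (by omega)]
  have hadd : (c2 + c1).val = 3 := by
    rw [Fin.val_add, hc1, hc2, Nat.mod_eq_of_lt (by omega)]
  have hadd1 : (c1 + c1).val = 2 := by
    rw [Fin.val_add, hc1, Nat.mod_eq_of_lt (by omega)]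
  have hc2' : c2 = c1 + c1 := Fin.ext (by rw [hadd1, hc2])
  have dv21 : (a2 - i).val = 2 := by
    rw [show a2 - i = c2 by rw [ha2]; abel, hc2]
  have dv12 : (i - a2).val = 2*t - 1 := by
    rw [show i - a2 = -c2 by rw [ha2]; abel, hneg c2 (by omega), hc2]
    omega
  have dv23 : (a2 - a3).val = 3 := by
    rw [show a2 - a3 = c2 + c1 by rw [ha2, ha3]; abel, hadd]
  have dv32 : (a3 - a2).val = 2*t - 2 := by
    rw [show a3 - a2 = -(c2 + c1) by rw [ha2, ha3]; abel, hneg _ (by omega), hadd]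
    omega
  have dv34 : (a3 - a4).val = 2*t - 1 := by
    rw [show a3 - a4 = -(c1 + c1) by rw [ha3, ha4]; abel, hneg _ (by omega), hadd1]
    omega
  have dv43 : (a4 - a3).val = 2 := by
    rw [show a4 - a3 = c1 + c1 by rw [ha3, ha4]; abel, hadd1]
  have dv13 : (i - a3).val = 1 := by
    rw [show i - a3 = c1 by rw [ha3]; abel, hc1]
  have dv41 : (a4 - i).val = 1 := by
    rw [show a4 - i = c1 by rw [ha4]; abel, hc1]
  have dv24 : (a2 - a4).val = 1 := by
    rw [show a2 - a4 = c1 by rw [ha2, ha4, hc2']; abel, hc1]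
  -- antihole adjacencies and non-adjacencies
  have A12 : ((cycleGraph (2*t+1))ᶜ).Adj i a2 :=
    antihole_adj (by omega) (by omega) (by omega)
  have A23 : ((cycleGraph (2*t+1))ᶜ).Adj a2 a3 :=
    antihole_adj (by omega) (by omega) (by omega)
  have A34 : ((cycleGraph (2*t+1))ᶜ).Adj a3 a4 :=
    antihole_adj (by omega) (by omega) (by omega)
  have N13 : ¬ ((cycleGraph (2*t+1))ᶜ).Adj i a3 := antihole_nonadj dv13
  have N41 : ¬ ((cycleGraph (2*t+1))ᶜ).Adj a4 i := antihole_nonadj dv41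
  have N24 : ¬ ((cycleGraph (2*t+1))ᶜ).Adj a2 a4 := antihole_nonadj dv24
  -- distinctness
  have ne2 : a2 ≠ i := fin_ne_of_sub (by omega)
  have ne3 : a3 ≠ i := (fin_ne_of_sub (a := i) (b := a3) (by omega)).symm
  have ne4 : a4 ≠ i := fin_ne_of_sub (by omega)
  have ne24 : a2 ≠ a4 := fin_ne_of_sub (by omega)
  -- lift to G
  have hmap : ∀ a b : Fin (2*t+1), G.Adj (f a) (f b) ↔ ((cycleGraph (2*t+1))ᶜ).Adj a b :=
    fun a b => f.map_rel_iff
  have hN : ∀ j : Fin (2*t+1), j ≠ i → ¬ G.Adj x (f j) := fun j hj ha => hj (huniq j ha)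
  have hxne : ∀ j : Fin (2*t+1), x ≠ f j := fun j h => hx ⟨j, h.symm⟩
  have finj : ∀ {a b : Fin (2*t+1)}, f a = f b → a = b := fun h => f.injective h
  have q12 : f i ≠ f a2 := fun h => A12.ne (finj h)
  have q13 : f i ≠ f a3 := fun h => ne3 (finj h).symm
  have q14 : f i ≠ f a4 := fun h => ne4 (finj h).symm
  have q23 : f a2 ≠ f a3 := fun h => A23.ne (finj h)
  have q24 : f a2 ≠ f a4 := fun h => ne24 (finj h)
  have q34 : f a3 ≠ f a4 := fun h => A34.ne (finj h)
  -- build the induced P5 : x - f i - f a2 - f a3 - f a4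
  have emb : pathGraph 5 ↪g G := by
    refine ⟨⟨![x, f i, f a2, f a3, f a4], ?_⟩, ?_⟩
    · intro a b h
      fin_cases a <;> fin_cases b <;>
        first
          | rfl
          | exact absurd h (hxne _)
          | exact absurd h.symm (hxne _)
          | exact absurd h q12
          | exact absurd h.symm q12
          | exact absurd h q13
          | exact absurd h.symm q13
          | exact absurd h q14
          | exact absurd h.symm q14
          | exact absurd h q23
          | exact absurd h.symm q23
          | exact absurd h q24
          | exact absurd h.symm q24
          | exact absurd h q34
          | exact absurd h.symm q34
    · intro a b
      fin_cases a <;> fin_cases b <;>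
        first
          | exact iff_of_false (G.irrefl) (by rw [pathGraph_adj]; decide)
          | exact iff_of_true hxi (by rw [pathGraph_adj]; decide)
          | exact iff_of_true hxi.symm (by rw [pathGraph_adj]; decide)
          | exact iff_of_true ((hmap _ _).2 A12) (by rw [pathGraph_adj]; decide)
          | exact iff_of_true ((hmap _ _).2 A12).symm (by rw [pathGraph_adj]; decide)
          | exact iff_of_true ((hmap _ _).2 A23) (by rw [pathGraph_adj]; decide)
          | exact iff_of_true ((hmap _ _).2 A23).symm (by rw [pathGraph_adj]; decide)
          | exact iff_of_true ((hmap _ _).2 A34) (by rw [pathGraph_adj]; decide)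
          | exact iff_of_true ((hmap _ _).2 A34).symm (by rw [pathGraph_adj]; decide)
          | exact iff_of_false (hN _ ne2) (by rw [pathGraph_adj]; decide)
          | exact iff_of_false (fun h => hN _ ne2 h.symm) (by rw [pathGraph_adj]; decide)
          | exact iff_of_false (hN _ ne3) (by rw [pathGraph_adj]; decide)
          | exact iff_of_false (fun h => hN _ ne3 h.symm) (by rw [pathGraph_adj]; decide)
          | exact iff_of_false (hN _ ne4) (by rw [pathGraph_adj]; decide)
          | exact iff_of_false (fun h => hN _ ne4 h.symm) (by rw [pathGraph_adj]; decide)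
          | exact iff_of_false (fun h => N13 ((hmap _ _).1 h)) (by rw [pathGraph_adj]; decide)
          | exact iff_of_false (fun h => N13 ((hmap _ _).1 h.symm)) (by rw [pathGraph_adj]; decide)
          | exact iff_of_false (fun h => N41 ((hmap _ _).1 h)) (by rw [pathGraph_adj]; decide)
          | exact iff_of_false (fun h => N41 ((hmap _ _).1 h.symm)) (by rw [pathGraph_adj]; decide)
          | exact iff_of_false (fun h => N24 ((hmap _ _).1 h)) (by rw [pathGraph_adj]; decide)
          | exact iff_of_false (fun h => N24 ((hmap _ _).1 h.symm)) (by rw [pathGraph_adj]; decide)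
  exact hP5.false emb
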